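/- Sliding Lemma: transition maps preserve central symmetric pairings. Let x be a unit of R whose norm N(x) is a central unit fixed by σ, let ℓ ∈ {0,1}, and let m = m_{x,ℓ}. If v, w ∈ R are such that b(v,w) is central and σ(b(v,w)) = b(v,w), then b(m(v), m(w)) = b(v,w). -/
import Mathlib


/-- The norm `N(x) = x · τ(x)`. -/
def Nrm {R : Type*} [Ring R] (τ : R → R) (x : R) : R := x * τ x

/-- The symmetric pairing `b(u,v) = u·τ(v) + v·τ(u)`. -/
def Bform {R : Type*} [Ring R] (τ : R → R) (u v : R) : R := u * τ v + v * τ u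

/-- `x` has central `σ`-fixed norm. -/
def CentralFixedNorm {R : Type*} [Ring R] (σ τ : R → R) (x : R) : Prop :=
  (∀ y, Nrm τ x * y = y * Nrm τ x) ∧ σ (Nrm τ x) = Nrm τ x

/-- The transition map `m_{x,ℓ}(u) = N(x)⁻¹ · (σ∘τ)^ℓ(τ(x) · u · σ(τ(x)))`. -/
noncomputable def TransitionMap {R : Type*} [Ring R] (σ τ : R → R) (x : R) (ℓ : ℕ) :
    R → R :=
  fun u => Ring.inverse (Nrm τ x) * (σ ∘ τ)^[ℓ] (τ x * u * σ (τ x))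

/-- Sliding Lemma: transition maps preserve central symmetric pairings. If `b(v,w)`
is central and fixed by `σ`, then `b(m(v), m(w)) = b(v,w)` for any transition map
`m = m_{x,ℓ}` with `x` a unit whose norm is a central unit fixed by `σ`. -/
theorem sliding_lemma {R : Type*} [Ring R] (σ τ : R → R)
    (hσadd : ∀ x y, σ (x + y) = σ x + σ y)
    (hσmul : ∀ x y, σ (x * y) = σ y * σ x)
    (hσone : σ 1 = 1)
    (hσσ : ∀ x, σ (σ x) = x)
    (hτadd : ∀ x y, τ (x + y) = τ x + τ y)
    (hτmul : ∀ x y, τ (x * y) = τ y * τ x)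
    (hτone : τ 1 = 1)
    (hττ : ∀ x, τ (τ x) = x)
    (hστ : ∀ x, σ (τ x) = τ (σ x))
    (x : R) (hx : IsUnit x) (hn : CentralFixedNorm σ τ x) (hnu : IsUnit (Nrm τ x))
    (ℓ : ℕ) (hℓ : ℓ = 0 ∨ ℓ = 1)
    (v w : R)
    (hb : (∀ y, Bform τ v w * y = y * Bform τ v w) ∧ σ (Bform τ v w) = Bform τ v w) :
    Bform τ (TransitionMap σ τ x ℓ v) (TransitionMap σ τ x ℓ w) = Bform τ v w := by

  -- Notation
  have hNdef : Nrm τ x = x * τ x := rfl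
  have hcn := hn.1
  have hσn := hn.2
  have hin : Ring.inverse (Nrm τ x) * Nrm τ x = 1 := Ring.inverse_mul_cancel _ hnu
  have hni : Nrm τ x * Ring.inverse (Nrm τ x) = 1 := Ring.mul_inverse_cancel _ hnu
  set n : R := Nrm τ x with hn_def
  set i : R := Ring.inverse (Nrm τ x) with hi_def
  -- i is central
  have hci : ∀ y : R, i * y = y * i := by
    intro y
    calc i * y = i * y * (n * i) := by rw [hni, mul_one]
      _ = i * (y * n) * i := by noncomm_ring
      _ = i * (n * y) * i := by rw [← hcn]
      _ = (i * n) * (y * i) := by noncomm_ring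
      _ = y * i := by rw [hin, one_mul]
  -- τ fixes n and i
  have hτn : τ n = n := by rw [hNdef, hτmul, hττ]
  have hτi : τ i = i := by
    have h1 : n * τ i = 1 := by
      have := congrArg τ hin
      rwa [hτmul, hτn, hτone] at this
    calc τ i = (i * n) * τ i := by rw [hin, one_mul]
      _ = i * (n * τ i) := by rw [mul_assoc]
      _ = i := by rw [h1, mul_one]
  -- σ fixes i
  have hσi : σ i = i := by
    have h1 : n * σ i = 1 := by
      have := congrArg σ hin
      rwa [hσmul, hσn, hσone] at this
    calc σ i = (i * n) * σ i := by rw [hin, one_mul]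
      _ = i * (n * σ i) := by rw [mul_assoc]
      _ = i := by rw [h1, mul_one]
  -- τ x * x = n
  have hτxx : τ x * x = n := by
    have h := hcn x
    have h2 : x * (τ x * x) = x * n := by rw [← mul_assoc]; exact h
    exact hx.mul_left_cancel h2
  -- σ(τ x) * σ x = n
  have hstn : σ (τ x) * σ x = n := by rw [← hσmul]; exact hσn
  -- σ x * σ (τ x) = σ n = n
  have hstn' : σ x * σ (τ x) = n := by
    rw [← hσmul]
    have : σ (τ x * x) = n := by rw [hτxx]; exact hσn
    exact this
  have hcb := hb.1
  have hσb := hb.2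
  set b : R := Bform τ v w with hb_def
  rcases hℓ with rfl | rfl
  · -- case ℓ = 0
    have hm : ∀ u : R, TransitionMap σ τ x 0 u = i * (τ x * u * σ (τ x)) := by
      intro u; simp [TransitionMap, hi_def, hn_def]
    have hτm : ∀ z : R, τ (i * (τ x * z * σ (τ x))) = σ x * τ z * x * i := by
      intro z
      rw [hτmul, hτi, hτmul, hτmul, hττ, hστ, hττ]
      noncomm_ring
    have key : ∀ u z : R,
        (i * (τ x * u * σ (τ x))) * (σ x * τ z * x * i) = i * (τ x * (u * τ z) * x) := by
      intro u z
      calc (i * (τ x * u * σ (τ x))) * (σ x * τ z * x * i)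
          = i * ((τ x * u) * (σ (τ x) * σ x) * (τ z * x)) * i := by noncomm_ring
        _ = i * ((τ x * u) * n * (τ z * x)) * i := by rw [hstn]
        _ = i * (n * ((τ x * u) * (τ z * x))) * i := by rw [← hcn]; noncomm_ring
        _ = (i * n) * (((τ x * u) * (τ z * x)) * i) := by noncomm_ring
        _ = ((τ x * u) * (τ z * x)) * i := by rw [hin, one_mul]
        _ = i * (τ x * (u * τ z) * x) := by rw [← hci]; noncomm_ring
    show Bform τ (TransitionMap σ τ x 0 v) (TransitionMap σ τ x 0 w) = b
    rw [Bform, hm v, hm w, hτm w, hτm v, key v w, key w v]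
    calc i * (τ x * (v * τ w) * x) + i * (τ x * (w * τ v) * x)
        = i * (τ x * (v * τ w + w * τ v) * x) := by noncomm_ring
      _ = i * (τ x * b * x) := by rw [hb_def, Bform]
      _ = i * (b * (τ x * x)) := by rw [← hcb]; noncomm_ring
      _ = i * (b * n) := by rw [hτxx]
      _ = (i * n) * b := by rw [hcb]; noncomm_ring
      _ = b := by rw [hin, one_mul]
  · -- case ℓ = 1
    have hm : ∀ u : R, TransitionMap σ τ x 1 u = i * (σ x * σ (τ u) * x) := by
      intro u
      simp only [TransitionMap, Function.iterate_one, Function.comp_apply, ← hi_def, ← hn_def]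
      congr 1
      rw [hτmul, hτmul, hττ, hστ, hττ, hσmul, hσmul, hσσ, hστ]
    have hτm : ∀ z : R, τ (i * (σ x * σ (τ z) * x)) = τ x * σ z * σ (τ x) * i := by
      intro z
      rw [hτmul, hτi, hτmul, hτmul, ← hστ, hττ, hστ]
      noncomm_ring
    have key : ∀ u z : R,
        (i * (σ x * σ (τ u) * x)) * (τ x * σ z * σ (τ x) * i)
          = i * (σ x * σ (z * τ u) * σ (τ x)) := by
      intro u z
      calc (i * (σ x * σ (τ u) * x)) * (τ x * σ z * σ (τ x) * i)
          = i * ((σ x * σ (τ u)) * (x * τ x) * (σ z * σ (τ x))) * i := by noncomm_ring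
        _ = i * ((σ x * σ (τ u)) * n * (σ z * σ (τ x))) * i := by rw [← hNdef]
        _ = i * (n * ((σ x * σ (τ u)) * (σ z * σ (τ x)))) * i := by rw [← hcn]; noncomm_ring
        _ = (i * n) * (((σ x * σ (τ u)) * (σ z * σ (τ x))) * i) := by noncomm_ring
        _ = ((σ x * σ (τ u)) * (σ z * σ (τ x))) * i := by rw [hin, one_mul]
        _ = (σ x * (σ (τ u) * σ z) * σ (τ x)) * i := by noncomm_ring
        _ = (σ x * σ (z * τ u) * σ (τ x)) * i := by rw [hσmul]
        _ = i * (σ x * σ (z * τ u) * σ (τ x)) := by rw [← hci]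
    show Bform τ (TransitionMap σ τ x 1 v) (TransitionMap σ τ x 1 w) = b
    rw [Bform, hm v, hm w, hτm w, hτm v, key v w, key w v]
    calc i * (σ x * σ (w * τ v) * σ (τ x)) + i * (σ x * σ (v * τ w) * σ (τ x))
        = i * (σ x * (σ (w * τ v) + σ (v * τ w)) * σ (τ x)) := by noncomm_ring
      _ = i * (σ x * σ (v * τ w + w * τ v) * σ (τ x)) := by rw [hσadd, add_comm]
      _ = i * (σ x * σ b * σ (τ x)) := by rw [hb_def, Bform]
      _ = i * (σ x * b * σ (τ x)) := by rw [hσb]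
      _ = i * (b * (σ x * σ (τ x))) := by rw [← hcb]; noncomm_ring
      _ = i * (b * n) := by rw [hstn']
      _ = (i * n) * b := by rw [hcb]; noncomm_ring
      _ = b := by rw [hin, one_mul]
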